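/- Let M be a submonoid of the full transformation monoid on {1,…,n} whose unique element of rank n is the identity, and let X be a generating set of M. Then for every α ∈ M of rank n−1 there exists γ ∈ X with rank n−1 and Ker(γ) = Ker(α). -/

import Mathlib

open Finset in
lemma ker_of_card_eq {n : ℕ} (b a : Fin n → Fin n)
    (hsub : ∀ x y, b x = b y → a x = a y)
    (hcard : (Finset.univ.image b).card = (Finset.univ.image a).card) :
    ∀ x y, a x = a y → b x = b y := by
  classical
  set h : Fin n → Fin n := fun y => if hy : ∃ x, b x = y then a hy.choose else y with hh
  have key : ∀ x, h (b x) = a x := by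
    intro x
    have hex : ∃ x', b x' = b x := ⟨x, rfl⟩
    simp only [hh, dif_pos hex]
    exact hsub _ _ hex.choose_spec
  have himg : (Finset.univ.image b).image h = Finset.univ.image a := by
    ext y
    simp only [Finset.mem_image, Finset.mem_univ, true_and]
    constructor
    · rintro ⟨z, ⟨x, rfl⟩, rfl⟩; exact ⟨x, (key x).symm⟩
    · rintro ⟨x, rfl⟩; exact ⟨b x, ⟨x, rfl⟩, key x⟩
  have hinj : Set.InjOn h (Finset.univ.image b) := by
    apply Finset.injOn_of_card_image_eq
    rw [himg, hcard]
  intro x y hxy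
  have hbx : b x ∈ Finset.univ.image b := Finset.mem_image.2 ⟨x, Finset.mem_univ x, rfl⟩
  have hby : b y ∈ Finset.univ.image b := Finset.mem_image.2 ⟨y, Finset.mem_univ y, rfl⟩
  exact hinj hbx hby (by rw [key x, key y, hxy])

theorem stmt_15 (n : ℕ) (hn : 1 ≤ n) (M : Submonoid (Function.End (Fin n)))
    (hM : ∀ f ∈ M, (Finset.univ.image (f : Fin n → Fin n)).card = n → f = 1)
    (X : Set (Function.End (Fin n))) (hX : Submonoid.closure X = M) :
    ∀ α ∈ M, (Finset.univ.image (α : Fin n → Fin n)).card = n - 1 →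
      ∃ γ ∈ X, (Finset.univ.image (γ : Fin n → Fin n)).card = n - 1 ∧
        ∀ x y : Fin n, γ x = γ y ↔ α x = α y := by
  classical
  have rank_le : ∀ f : Fin n → Fin n, (Finset.univ.image f).card ≤ n := by
    intro f
    calc (Finset.univ.image f).card ≤ (Finset.univ : Finset (Fin n)).card :=
          Finset.card_image_le
      _ = n := by simp
  have main : ∀ α ∈ Submonoid.closure X,
      (Finset.univ.image (α : Fin n → Fin n)).card = n - 1 →
      ∃ γ ∈ X, (Finset.univ.image (γ : Fin n → Fin n)).card = n - 1 ∧
        ∀ x y : Fin n, γ x = γ y ↔ α x = α y := by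
    intro α hα
    induction hα using Submonoid.closure_induction with
    | mem γ hγ => exact fun hr => ⟨γ, hγ, hr, fun x y => Iff.rfl⟩
    | one =>
      intro hr
      have : ((1 : Function.End (Fin n)) : Fin n → Fin n) = id := rfl
      rw [this] at hr
      simp [Finset.image_id] at hr
      omega
    | mul a b ha hb pa pb =>
      intro hr
      have hcomp : ((a * b : Function.End (Fin n)) : Fin n → Fin n) = a ∘ b := rfl
      have himg : Finset.univ.image ((a * b : Function.End (Fin n)) : Fin n → Fin n)
          = (Finset.univ.image (b : Fin n → Fin n)).image (a : Fin n → Fin n) := by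
        rw [hcomp]; exact Finset.image_image.symm
      have hle : n - 1 ≤ (Finset.univ.image (b : Fin n → Fin n)).card := by
        rw [← hr, himg]; exact Finset.card_image_le
      have hbM : b ∈ M := hX ▸ hb
      by_cases hbn : (Finset.univ.image (b : Fin n → Fin n)).card = n
      · have hb1 : b = 1 := hM b hbM hbn
        subst hb1
        rw [mul_one] at hr ⊢
        exact pa hr
      · have hbcard : (Finset.univ.image (b : Fin n → Fin n)).card = n - 1 := by
          have := rank_le (b : Fin n → Fin n)
          omega
        obtain ⟨γ, hγX, hγr, hγk⟩ := pb hbcard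
        refine ⟨γ, hγX, hγr, fun x y => ?_⟩
        have hsub : ∀ x y : Fin n, b x = b y → (a * b) x = (a * b) y := by
          intro x y hxy
          show a (b x) = a (b y)
          rw [hxy]
        have hrev := ker_of_card_eq (b : Fin n → Fin n)
          ((a * b : Function.End (Fin n)) : Fin n → Fin n) hsub (by rw [hbcard, hr])
        rw [hγk x y]
        exact ⟨fun h => hsub x y h, fun h => hrev x y h⟩
  intro α hαM
  exact main α (hX ▸ hαM)
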